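/- arXiv:2503.20883 — 2 statements merged into one kernel-verified Lean document; each statement's English description precedes it below -/
import Mathlib

section
/- Let G=(V,E) be a graph of positive edges over a complete signed graph, and for S ⊆ V define cost(S) = (1/2)·|E⁺(S, V∖S)| + |E⁻(S)|, where E⁺(S,V∖S) is the set of positive edges with exactly one endpoint in S and E⁻(S) is the set of negative edges with both endpoints in S. Suppose d_cross : V → ℝ assigns to each v a nonnegative value, and define cover(S) = cost(S) + Σ_{v∈S} d_cross(v). If U ⊂ W ⊆ V (strict inclusion) and for every v ∈ W∖U we have d_cross(v) > |E⁺(v, U)|/2 (where E⁺(v,U) denotes positive edges from v into U), then cover(U) < cover(W). -/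
open Finset

variable {V : Type*} [Fintype V] [DecidableEq V]

/-- Number of ordered pairs `(u, v)` with `u ∈ S`, `v ∉ S`, `adj u v`;
this counts each positive edge leaving `S` exactly once (per endpoint in `S`). -/
def posCross (adj : V → V → Prop) [DecidableRel adj] (S : Finset V) : ℕ :=
  ((univ ×ˢ univ).filter fun p : V × V => p.1 ∈ S ∧ p.2 ∉ S ∧ adj p.1 p.2).card

/-- Number of ordered pairs of distinct non-adjacent vertices inside `S`;
this equals twice `|E⁻(S)|`. -/
def negInsideTwice (adj : V → V → Prop) [DecidableRel adj] (S : Finset V) : ℕ :=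
  ((univ ×ˢ univ).filter fun p : V × V =>
    p.1 ∈ S ∧ p.2 ∈ S ∧ p.1 ≠ p.2 ∧ ¬ adj p.1 p.2).card

/-- `cost(S) = (1/2)·|E⁺(S, V∖S)| + |E⁻(S)|`. -/
noncomputable def clusterCost (adj : V → V → Prop) [DecidableRel adj] (S : Finset V) : ℝ :=
  (posCross adj S : ℝ) / 2 + (negInsideTwice adj S : ℝ) / 2

/-- `cover(S) = cost(S) + Σ_{v ∈ S} d_cross(v)`. -/
noncomputable def coverCost (adj : V → V → Prop) [DecidableRel adj]
    (dcross : V → ℝ) (S : Finset V) : ℝ :=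
  clusterCost adj S + ∑ v ∈ S, dcross v

lemma card_pairs_into (adj : V → V → Prop) [DecidableRel adj]
    (hsym : ∀ u v, adj u v → adj v u) (U T : Finset V) :
    ((univ ×ˢ univ).filter fun p : V × V => p.1 ∈ U ∧ p.2 ∈ T ∧ adj p.1 p.2).card
      = ∑ v ∈ T, (U.filter (adj v)).card := by
  classical
  rw [Finset.card_eq_sum_card_fiberwise
    (f := fun p : V × V => p.2) (t := T) (by intro p hp; simp at hp; exact hp.2.1)]
  refine Finset.sum_congr rfl fun v hv => ?_
  refine Finset.card_bij (fun p _ => p.1) ?_ ?_ ?_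
  · intro p hp
    simp only [Finset.mem_filter, Finset.mem_product, Finset.mem_univ] at hp ⊢
    obtain ⟨⟨_, h1, h2, h3⟩, h4⟩ := hp
    exact ⟨h1, hsym _ _ (h4 ▸ h3)⟩
  · intro p hp q hq h
    simp only [Finset.mem_filter] at hp hq
    exact Prod.ext h (hp.2.trans hq.2.symm)
  · intro u hu
    simp only [Finset.mem_filter] at hu
    exact ⟨(u, v), by simp [hu.1, hv, hsym _ _ hu.2], rfl⟩

/-- If `U ⊂ W` and every `v ∈ W \ U` has
`d_cross(v) > |E⁺(v, U)|/2`, then `cover(U) < cover(W)`. -/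
theorem cover_strict_mono (adj : V → V → Prop) [DecidableRel adj]
    (hsym : ∀ u v, adj u v → adj v u)
    (dcross : V → ℝ) (hd0 : ∀ v, 0 ≤ dcross v)
    (U W : Finset V) (hUW : U ⊂ W)
    (hd : ∀ v ∈ W \ U, ((U.filter (adj v)).card : ℝ) / 2 < dcross v) :
    coverCost adj dcross U < coverCost adj dcross W := by
  classical
  have hsub : U ⊆ W := hUW.subset
  -- key combinatorial bound
  have hpos : posCross adj U ≤ posCross adj W + ∑ v ∈ W \ U, (U.filter (adj v)).card := by
    rw [← card_pairs_into adj hsym U (W \ U)]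
    have hsubset :
        ((univ ×ˢ univ).filter fun p : V × V => p.1 ∈ U ∧ p.2 ∉ U ∧ adj p.1 p.2) ⊆
        ((univ ×ˢ univ).filter fun p : V × V => p.1 ∈ W ∧ p.2 ∉ W ∧ adj p.1 p.2) ∪
        ((univ ×ˢ univ).filter fun p : V × V => p.1 ∈ U ∧ p.2 ∈ W \ U ∧ adj p.1 p.2) := by
      intro p hp
      simp only [Finset.mem_filter, Finset.mem_union, Finset.mem_sdiff] at hp ⊢
      obtain ⟨hmem, h1, h2, h3⟩ := hp
      by_cases hw : p.2 ∈ W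
      · exact Or.inr ⟨hmem, h1, ⟨hw, h2⟩, h3⟩
      · exact Or.inl ⟨hmem, hsub h1, hw, h3⟩
    calc posCross adj U ≤ _ := Finset.card_le_card hsubset
      _ ≤ _ := Finset.card_union_le _ _
  have hneg : negInsideTwice adj U ≤ negInsideTwice adj W := by
    apply Finset.card_le_card
    apply Finset.monotone_filter_right
    intro p _ hp
    exact ⟨hsub hp.1, hsub hp.2.1, hp.2.2⟩
  have hne : (W \ U).Nonempty := by
    obtain ⟨v, hvW, hvU⟩ := Finset.exists_of_ssubset hUW
    exact ⟨v, Finset.mem_sdiff.mpr ⟨hvW, hvU⟩⟩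
  have hsumlt : ∑ v ∈ W \ U, ((U.filter (adj v)).card : ℝ) / 2 < ∑ v ∈ W \ U, dcross v :=
    Finset.sum_lt_sum_of_nonempty hne hd
  have hsplit : ∑ v ∈ W, dcross v = ∑ v ∈ U, dcross v + ∑ v ∈ W \ U, dcross v := by
    rw [← Finset.sum_sdiff hsub]; ring
  have hposR : (posCross adj U : ℝ) ≤
      (posCross adj W : ℝ) + ∑ v ∈ W \ U, ((U.filter (adj v)).card : ℝ) := by
    have := hpos
    push_cast [← Nat.cast_sum] at *
    exact_mod_cast hpos
  have hnegR : (negInsideTwice adj U : ℝ) ≤ (negInsideTwice adj W : ℝ) := by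
    exact_mod_cast hneg
  have hhalf : ∑ v ∈ W \ U, ((U.filter (adj v)).card : ℝ) / 2
      = (∑ v ∈ W \ U, ((U.filter (adj v)).card : ℝ)) / 2 := by
    rw [Finset.sum_div]
  simp only [coverCost, clusterCost]
  rw [hsplit]
  rw [hhalf] at hsumlt
  linarith
end

section
/- Under the MWU update of the previous setting with T = log(1/γ)/γ⁴ rounds, suppose additionally that each round's margins satisfy ⟨p^{(t)}, m^{(t)}⟩ ≥ 0, and let U ⊆ V be the set of vertices u with Σ_{t≤T} m_u^{(t)} ≤ −2γT. Then Σ_{u∈U} w_u^{(1)} ≤ γ · Σ_{v∈V} w_v^{(1)}. -/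
open Finset Real

lemma exp_quad_bound (γ x : ℝ) (hγ0 : 0 < γ) (hγ1 : γ < 1)
    (hx1 : -1 ≤ x) (hx2 : x ≤ 1 / γ - 1) :
    Real.exp (-(γ ^ 3) * x) ≤ 1 + (-(γ ^ 3) * x) + γ ^ 4 := by
  have hγinv : 1 ≤ 1 / γ := one_le_one_div hγ0 hγ1.le
  have hxabs : |x| ≤ 1 / γ := by
    rw [abs_le]; constructor <;> linarith
  have hyabs : |(-(γ ^ 3) * x)| ≤ γ ^ 2 := by
    rw [abs_mul, abs_neg, abs_of_nonneg (by positivity : (0:ℝ) ≤ γ ^ 3)]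
    calc γ ^ 3 * |x| ≤ γ ^ 3 * (1 / γ) := by
          exact mul_le_mul_of_nonneg_left hxabs (by positivity)
      _ = γ ^ 2 := by field_simp
  have hy1 : |(-(γ ^ 3) * x)| ≤ 1 := hyabs.trans (by nlinarith)
  have hb := Real.exp_bound hy1 (n := 2) (by norm_num)
  have hsum : ∑ i ∈ Finset.range 2, (-(γ ^ 3) * x) ^ i / (Nat.factorial i) = 1 + (-(γ ^ 3) * x) := by
    simp [Finset.sum_range_succ, Nat.factorial]
  rw [hsum] at hb
  have hsq : (-(γ ^ 3) * x) ^ 2 ≤ γ ^ 4 := by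
    have := sq_le_sq' (neg_le_of_abs_le hyabs) (le_of_abs_le hyabs)
    nlinarith
  have habs := abs_le.mp hb
  have : |(-(γ ^ 3) * x)| ^ 2 = (-(γ ^ 3) * x) ^ 2 := sq_abs _
  norm_num [Nat.factorial] at habs
  rw [neg_mul, neg_sq] at hsq
  have h2 := habs.2
  rw [← neg_mul] at h2
  nlinarith [sq_nonneg (γ ^ 3 * x), (by rw [← abs_pow, ← abs_mul, sq_abs] : (|γ| ^ 3 * |x|) ^ 2 = (γ ^ 3 * x) ^ 2)]

/-- MWU: uncovered weight is small.  Under the MWU update with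
`T = log(1/γ)/γ⁴` rounds and nonnegative round margins `⟨p^{(t)}, m^{(t)}⟩ ≥ 0`,
the set `U` of indices `u` with `Σ_{t≤T} m_u^{(t)} ≤ −2γT` satisfies
`Σ_{u∈U} w_u^{(1)} ≤ γ · Σ_v w_v^{(1)}`. -/
theorem mwu_uncovered_weight_small {V : Type*} [Fintype V] [Nonempty V]
    (γ : ℝ) (hγ0 : 0 < γ) (hγ1 : γ < 1) (T : ℕ)
    (hT : (T : ℝ) = Real.log (1 / γ) / γ ^ 4)
    (w : ℕ → V → ℝ) (m : ℕ → V → ℝ)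
    (hw1 : ∀ v, 0 < w 1 v)
    (hm : ∀ t ∈ Finset.Icc 1 T, ∀ v, -1 ≤ m t v ∧ m t v ≤ 1 / γ - 1)
    (hupd : ∀ t ∈ Finset.Icc 1 T, ∀ v,
      w (t + 1) v = w t v * Real.exp (-(γ ^ 3) * m t v))
    (hmargin : ∀ t ∈ Finset.Icc 1 T,
      0 ≤ ∑ v, (w t v / ∑ x, w t x) * m t v)
    (U : Finset V)
    (hU : U = Finset.univ.filter fun u =>
      ∑ t ∈ Finset.Icc 1 T, m t u ≤ -(2 * γ * T)) :
    ∑ u ∈ U, w 1 u ≤ γ * ∑ v, w 1 v := by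
  have hγ4 : (0:ℝ) < γ ^ 4 := by positivity
  have hlog : γ ^ 4 * (T : ℝ) = Real.log (1 / γ) := by
    rw [hT]; field_simp
  -- weight formula
  have hform : ∀ t, t ≤ T → ∀ v,
      w (t + 1) v = w 1 v * Real.exp (-(γ ^ 3) * ∑ s ∈ Finset.Icc 1 t, m s v) := by
    intro t
    induction t with
    | zero => intro _ v; simp
    | succ n ih =>
      intro ht v
      have hn : n ≤ T := by omega
      have hmem : n + 1 ∈ Finset.Icc 1 T := Finset.mem_Icc.mpr ⟨by omega, ht⟩
      rw [hupd (n + 1) hmem v, ih hn v, Finset.sum_Icc_succ_top (by omega),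
        mul_assoc, ← Real.exp_add]
      ring_nf
  -- positivity of all weights
  have hwpos : ∀ t, t ≤ T → ∀ v, 0 < w (t + 1) v := by
    intro t ht v
    rw [hform t ht v]
    have := hw1 v
    positivity
  have hwpos' : ∀ t ∈ Finset.Icc 1 T, ∀ v, 0 < w t v := by
    intro t ht v
    rw [Finset.mem_Icc] at ht
    obtain ⟨s, rfl⟩ : ∃ s, t = s + 1 := ⟨t - 1, by omega⟩
    exact hwpos s (by omega) v
  -- one step potential bound
  have hstep : ∀ t ∈ Finset.Icc 1 T,
      ∑ v, w (t + 1) v ≤ Real.exp (γ ^ 4) * ∑ v, w t v := by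
    intro t ht
    have hSpos : 0 < ∑ x, w t x :=
      Finset.sum_pos (fun v _ => hwpos' t ht v) Finset.univ_nonempty
    have hm0 : 0 ≤ ∑ v, w t v * m t v := by
      have h := hmargin t ht
      have heq : ∑ v, (w t v / ∑ x, w t x) * m t v
          = (∑ v, w t v * m t v) / ∑ x, w t x := by
        rw [Finset.sum_div]
        exact Finset.sum_congr rfl fun v _ => by ring
      rw [heq] at h
      have := (le_div_iff₀ hSpos).mp h
      simpa using this
    have h1 : ∑ v, w (t + 1) v
        ≤ ∑ v, w t v * (1 + (-(γ ^ 3) * m t v) + γ ^ 4) := by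
      apply Finset.sum_le_sum
      intro v _
      rw [hupd t ht v]
      exact mul_le_mul_of_nonneg_left
        (exp_quad_bound γ (m t v) hγ0 hγ1 (hm t ht v).1 (hm t ht v).2)
        (hwpos' t ht v).le
    have h2 : ∑ v, w t v * (1 + (-(γ ^ 3) * m t v) + γ ^ 4)
        = (1 + γ ^ 4) * ∑ v, w t v - γ ^ 3 * ∑ v, w t v * m t v := by
      rw [Finset.mul_sum, Finset.mul_sum, ← Finset.sum_sub_distrib]
      exact Finset.sum_congr rfl fun v _ => by ring
    have h3 : (1 + γ ^ 4) * ∑ v, w t v ≤ Real.exp (γ ^ 4) * ∑ v, w t v := by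
      apply mul_le_mul_of_nonneg_right _ hSpos.le
      linarith [Real.add_one_le_exp (γ ^ 4)]
    calc ∑ v, w (t + 1) v ≤ (1 + γ ^ 4) * ∑ v, w t v - γ ^ 3 * ∑ v, w t v * m t v := by
          rw [← h2]; exact h1
      _ ≤ (1 + γ ^ 4) * ∑ v, w t v := by nlinarith [pow_pos hγ0 3]
      _ ≤ Real.exp (γ ^ 4) * ∑ v, w t v := h3
  -- iterated potential bound
  have hΦ : ∀ t, t ≤ T → ∑ v, w (t + 1) v ≤ Real.exp (γ ^ 4) ^ t * ∑ v, w 1 v := by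
    intro t
    induction t with
    | zero => intro _; simp
    | succ n ih =>
      intro ht
      have hn : n ≤ T := by omega
      calc ∑ v, w (n + 1 + 1) v ≤ Real.exp (γ ^ 4) * ∑ v, w (n + 1) v :=
            hstep (n + 1) (Finset.mem_Icc.mpr ⟨by omega, ht⟩)
        _ ≤ Real.exp (γ ^ 4) * (Real.exp (γ ^ 4) ^ n * ∑ v, w 1 v) :=
            mul_le_mul_of_nonneg_left (ih hn) (Real.exp_pos _).le
        _ = Real.exp (γ ^ 4) ^ (n + 1) * ∑ v, w 1 v := by ring
  -- numeric identities
  have hexpT : Real.exp (γ ^ 4) ^ T = 1 / γ := by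
    rw [← Real.exp_nat_mul, mul_comm, hlog, Real.exp_log (by positivity)]
  -- lower bound on w (T+1) for u ∈ U
  have hlow : ∀ u ∈ U, w 1 u * (1 / γ ^ 2) ≤ w (T + 1) u := by
    intro u hu
    rw [hU, Finset.mem_filter] at hu
    rw [hform T le_rfl u]
    apply mul_le_mul_of_nonneg_left _ (hw1 u).le
    have : 2 * (γ ^ 4 * (T : ℝ)) ≤ -(γ ^ 3) * ∑ t ∈ Finset.Icc 1 T, m t u := by
      nlinarith [hu.2, pow_pos hγ0 3]
    calc (1:ℝ) / γ ^ 2 = Real.exp (2 * (γ ^ 4 * (T : ℝ))) := by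
          rw [two_mul, Real.exp_add, hlog, Real.exp_log (by positivity)]
          ring
      _ ≤ Real.exp (-(γ ^ 3) * ∑ t ∈ Finset.Icc 1 T, m t u) := Real.exp_le_exp.mpr this
  -- combine
  have hUsum : (∑ u ∈ U, w 1 u) * (1 / γ ^ 2) ≤ (1 / γ) * ∑ v, w 1 v := by
    calc (∑ u ∈ U, w 1 u) * (1 / γ ^ 2) = ∑ u ∈ U, w 1 u * (1 / γ ^ 2) := by
          rw [Finset.sum_mul]
      _ ≤ ∑ u ∈ U, w (T + 1) u := Finset.sum_le_sum hlow
      _ ≤ ∑ v, w (T + 1) v :=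
          Finset.sum_le_sum_of_subset_of_nonneg (Finset.subset_univ U)
            (fun v _ _ => (hwpos T le_rfl v).le)
      _ ≤ Real.exp (γ ^ 4) ^ T * ∑ v, w 1 v := hΦ T le_rfl
      _ = (1 / γ) * ∑ v, w 1 v := by rw [hexpT]
  have hγ2 : (0:ℝ) < γ ^ 2 := by positivity
  calc ∑ u ∈ U, w 1 u = ((∑ u ∈ U, w 1 u) * (1 / γ ^ 2)) * γ ^ 2 := by
        field_simp
    _ ≤ ((1 / γ) * ∑ v, w 1 v) * γ ^ 2 := mul_le_mul_of_nonneg_right hUsum hγ2.le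
    _ = γ * ∑ v, w 1 v := by field_simp
end
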